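/- For all n ≥ 1 and 1 ≤ k ≤ n: if n ≡ 0 or 1 (mod 4), then the number of even permutations in S_n with k-1 descents equals the number of even permutations with n-k descents; if n ≡ 2 or 3 (mod 4), then the number of even permutations with k-1 descents equals the number of odd permutations with n-k descents. -/

import Mathlib

open scoped Classical

/-- Number of descents of a permutation of `{0,…,n-1}`. -/
noncomputable def desA {n : ℕ} (w : Equiv.Perm (Fin n)) : ℕ :=
  ((Finset.range (n - 1)).filter (fun i =>
    ∃ h : i + 1 < n, w ⟨i + 1, h⟩ < w ⟨i, Nat.lt_of_succ_lt h⟩)).card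

/-- Number of inversions of a permutation. -/
noncomputable def invA {n : ℕ} (w : Equiv.Perm (Fin n)) : ℕ :=
  (Finset.univ.filter (fun p : Fin n × Fin n => p.1 < p.2 ∧ w p.2 < w p.1)).card

/-- Product of the swaps `(i, n-1-i)` for `i < m`. -/
def swapsUpTo (n : ℕ) : (m : ℕ) → m ≤ n → Equiv.Perm (Fin n)
  | 0, _ => 1
  | m + 1, h =>
      swapsUpTo n m (by omega) *
        Equiv.swap (⟨m, by omega⟩ : Fin n) ((⟨m, by omega⟩ : Fin n).rev)

lemma swapsUpTo_apply (n : ℕ) :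
    ∀ (m : ℕ) (hm : 2 * m ≤ n) (x : Fin n),
      swapsUpTo n m (by omega) x = if x.val < m ∨ n - m ≤ x.val then x.rev else x := by
  intro m
  induction m with
  | zero =>
    intro hm x
    have hx := x.isLt
    simp only [swapsUpTo, Equiv.Perm.one_apply]
    rw [if_neg (by omega)]
  | succ m ih =>
    intro hm x
    have hmn : m < n := by omega
    simp only [swapsUpTo, Equiv.Perm.mul_apply]
    have hm0 : ((⟨m, hmn⟩ : Fin n) : ℕ) = m := rfl
    have hval := Fin.val_rev (⟨m, hmn⟩ : Fin n)
    by_cases h1 : x = (⟨m, hmn⟩ : Fin n)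
    · subst h1
      rw [Equiv.swap_apply_left, ih (by omega)]
      rw [if_neg (by omega), if_pos (Or.inl (by omega))]
    · by_cases h2 : x = (⟨m, hmn⟩ : Fin n).rev
      · subst h2
        rw [Equiv.swap_apply_right, ih (by omega)]
        rw [if_neg (by omega), if_pos (Or.inr (by omega)), Fin.rev_rev]
      · rw [Equiv.swap_apply_of_ne_of_ne h1 h2, ih (by omega)]
        have hv1 : x.val ≠ m := fun h => h1 (Fin.ext h)
        have hv2 : x.val ≠ n - 1 - m := fun h => h2 (by
          apply Fin.ext; simp [Fin.val_rev]; omega)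
        have hx := x.isLt
        by_cases hc : x.val < m ∨ n - m ≤ x.val
        · rw [if_pos hc, if_pos (by omega)]
        · rw [if_neg hc, if_neg (by omega)]

lemma sign_swapsUpTo (n : ℕ) :
    ∀ (m : ℕ) (hm : 2 * m ≤ n),
      Equiv.Perm.sign (swapsUpTo n m (by omega)) = (-1) ^ m := by
  intro m
  induction m with
  | zero => intro hm; simp [swapsUpTo]
  | succ m ih =>
    intro hm
    have hne : (⟨m, by omega⟩ : Fin n) ≠ (⟨m, by omega⟩ : Fin n).rev := by
      apply Fin.ne_of_val_ne
      simp [Fin.val_rev]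
      omega
    simp only [swapsUpTo, map_mul, ih (by omega), Equiv.Perm.sign_swap hne, pow_succ]

lemma sign_revPerm' (n : ℕ) :
    Equiv.Perm.sign (Fin.revPerm : Equiv.Perm (Fin n)) = (-1) ^ (n / 2) := by
  have key : (Fin.revPerm : Equiv.Perm (Fin n)) = swapsUpTo n (n / 2) (by omega) := by
    apply Equiv.ext
    intro x
    rw [swapsUpTo_apply n (n / 2) (by omega) x]
    have hx := x.isLt
    by_cases hc : x.val < n / 2 ∨ n - n / 2 ≤ x.val
    · rw [if_pos hc]; rfl
    · rw [if_neg hc]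
      apply Fin.ext
      simp [Fin.val_rev]
      omega
  rw [key, sign_swapsUpTo n (n / 2) (by omega)]

lemma revPerm_mul_revPerm (n : ℕ) :
    (Fin.revPerm : Equiv.Perm (Fin n)) * Fin.revPerm = 1 := by
  apply Equiv.ext
  intro x
  simp [Fin.rev_rev]

lemma desA_add_desA (n : ℕ) (hn : 1 ≤ n) (w : Equiv.Perm (Fin n)) :
    desA (w * Fin.revPerm) + desA w = n - 1 := by
  classical
  unfold desA
  have hrev : ∀ (i : ℕ) (h : i < n),
      (w * (Fin.revPerm : Equiv.Perm (Fin n))) (⟨i, h⟩ : Fin n) = w (⟨n - 1 - i, by omega⟩ : Fin n) := by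
    intro i h
    simp only [Equiv.Perm.mul_apply, Fin.revPerm_apply]
    congr 1
    apply Fin.ext
    simp only [Fin.val_rev]
    omega
  have step1 :
      ((Finset.range (n - 1)).filter (fun i =>
        ∃ h : i + 1 < n,
          (w * (Fin.revPerm : Equiv.Perm (Fin n))) (⟨i + 1, h⟩ : Fin n)
            < (w * (Fin.revPerm : Equiv.Perm (Fin n))) (⟨i, Nat.lt_of_succ_lt h⟩ : Fin n))).card
      = ((Finset.range (n - 1)).filter (fun i =>
        ∃ h : i + 1 < n, w (⟨i, Nat.lt_of_succ_lt h⟩ : Fin n) < w (⟨i + 1, h⟩ : Fin n))).card := by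
    apply Finset.card_nbij' (i := fun i => n - 2 - i) (j := fun i => n - 2 - i)
    · intro a ha
      simp only [Finset.mem_coe, Finset.mem_filter, Finset.mem_range] at ha ⊢
      obtain ⟨ha1, h, ha2⟩ := ha
      refine ⟨by omega, by omega, ?_⟩
      rw [hrev _ h, hrev _ (Nat.lt_of_succ_lt h)] at ha2
      have e1 : (⟨n - 1 - (a + 1), by omega⟩ : Fin n) = ⟨n - 2 - a, by omega⟩ := by
        apply Fin.ext; simp; omega
      have e2 : (⟨n - 1 - a, by omega⟩ : Fin n) = ⟨n - 2 - a + 1, by omega⟩ := by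
        apply Fin.ext; simp; omega
      rw [e1, e2] at ha2
      exact ha2
    · intro a ha
      simp only [Finset.mem_coe, Finset.mem_filter, Finset.mem_range] at ha ⊢
      obtain ⟨ha1, h, ha2⟩ := ha
      refine ⟨by omega, by omega, ?_⟩
      rw [hrev _ (by omega : n - 2 - a + 1 < n), hrev _ (by omega : n - 2 - a < n)]
      have e1 : (⟨n - 1 - (n - 2 - a + 1), by omega⟩ : Fin n) = ⟨a, Nat.lt_of_succ_lt h⟩ := by
        apply Fin.ext; simp; omega
      have e2 : (⟨n - 1 - (n - 2 - a), by omega⟩ : Fin n) = ⟨a + 1, h⟩ := by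
        apply Fin.ext; simp; omega
      rw [e1, e2]
      exact ha2
    · intro a ha
      simp only [Finset.mem_coe, Finset.mem_filter, Finset.mem_range] at ha ⊢
      omega
    · intro a ha
      simp only [Finset.mem_coe, Finset.mem_filter, Finset.mem_range] at ha ⊢
      omega
  rw [step1]
  have step2 :
      ((Finset.range (n - 1)).filter (fun i =>
        ∃ h : i + 1 < n, w (⟨i, Nat.lt_of_succ_lt h⟩ : Fin n) < w (⟨i + 1, h⟩ : Fin n)))
      = ((Finset.range (n - 1)).filter (fun i =>
        ¬ ∃ h : i + 1 < n, w ⟨i + 1, h⟩ < w ⟨i, Nat.lt_of_succ_lt h⟩)) := by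
    apply Finset.filter_congr
    intro i hi
    simp only [Finset.mem_range] at hi
    have h : i + 1 < n := by omega
    have hne : w ⟨i + 1, h⟩ ≠ w ⟨i, Nat.lt_of_succ_lt h⟩ :=
      fun hc => by
        have := w.injective hc
        simp [Fin.ext_iff] at this
    constructor
    · rintro ⟨h', hlt⟩ ⟨h'', hlt'⟩
      exact absurd (lt_trans hlt hlt') (lt_irrefl _)
    · intro hna
      refine ⟨h, ?_⟩
      rcases lt_or_gt_of_ne hne with hlt | hgt
      · exact absurd ⟨h, hlt⟩ hna
      · exact hgt
  rw [step2, add_comm, Finset.card_filter_add_card_filter_not, Finset.card_range]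

theorem pm_eulerian_symmetry (n k : ℕ) (hn : 1 ≤ n) (hk1 : 1 ≤ k) (hkn : k ≤ n) :
    ((n % 4 = 0 ∨ n % 4 = 1) →
      (Finset.univ.filter (fun w : Equiv.Perm (Fin n) =>
          Equiv.Perm.sign w = 1 ∧ desA w = k - 1)).card
        = (Finset.univ.filter (fun w : Equiv.Perm (Fin n) =>
          Equiv.Perm.sign w = 1 ∧ desA w = n - k)).card) ∧
    ((n % 4 = 2 ∨ n % 4 = 3) →
      (Finset.univ.filter (fun w : Equiv.Perm (Fin n) =>
          Equiv.Perm.sign w = 1 ∧ desA w = k - 1)).card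
        = (Finset.univ.filter (fun w : Equiv.Perm (Fin n) =>
          Equiv.Perm.sign w = -1 ∧ desA w = n - k)).card) := by
  classical
  have hdes : ∀ w : Equiv.Perm (Fin n), desA (w * Fin.revPerm) + desA w = n - 1 :=
    desA_add_desA n hn
  have hdes' : ∀ w : Equiv.Perm (Fin n), desA w = k - 1 → desA (w * Fin.revPerm) = n - k := by
    intro w hw
    have := hdes w
    omega
  have hdes'' : ∀ w : Equiv.Perm (Fin n), desA w = n - k → desA (w * Fin.revPerm) = k - 1 := by
    intro w hw
    have h0 := hdes w
    have h1 : desA w ≤ n - 1 := by omega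
    omega
  have hinv : ∀ w : Equiv.Perm (Fin n), w * Fin.revPerm * Fin.revPerm = w := by
    intro w
    rw [mul_assoc, revPerm_mul_revPerm, mul_one]
  have hsgn : ∀ w : Equiv.Perm (Fin n),
      Equiv.Perm.sign (w * Fin.revPerm) = Equiv.Perm.sign w * (-1) ^ (n / 2) := by
    intro w
    rw [map_mul, sign_revPerm']
  constructor
  · intro hmod
    have hpow : ((-1 : ℤˣ)) ^ (n / 2) = 1 := Even.neg_one_pow (by
      rcases hmod with h | h <;> exact Nat.even_iff.mpr (by omega))
    apply Finset.card_nbij' (i := fun w => w * Fin.revPerm) (j := fun w => w * Fin.revPerm)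
    · intro w hw
      simp only [Finset.mem_coe, Finset.mem_filter, Finset.mem_univ, true_and] at hw ⊢
      exact ⟨by rw [hsgn, hpow, hw.1, mul_one], hdes' w hw.2⟩
    · intro w hw
      simp only [Finset.mem_coe, Finset.mem_filter, Finset.mem_univ, true_and] at hw ⊢
      exact ⟨by rw [hsgn, hpow, hw.1, mul_one], hdes'' w hw.2⟩
    · intro w _; exact hinv w
    · intro w _; exact hinv w
  · intro hmod
    have hpow : ((-1 : ℤˣ)) ^ (n / 2) = -1 := Odd.neg_one_pow (by
      rcases hmod with h | h <;> exact Nat.odd_iff.mpr (by omega))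
    apply Finset.card_nbij' (i := fun w => w * Fin.revPerm) (j := fun w => w * Fin.revPerm)
    · intro w hw
      simp only [Finset.mem_coe, Finset.mem_filter, Finset.mem_univ, true_and] at hw ⊢
      exact ⟨by rw [hsgn, hpow, hw.1, one_mul], hdes' w hw.2⟩
    · intro w hw
      simp only [Finset.mem_coe, Finset.mem_filter, Finset.mem_univ, true_and] at hw ⊢
      refine ⟨?_, hdes'' w hw.2⟩
      rw [hsgn, hpow, hw.1]
      decide
    · intro w _; exact hinv w
    · intro w _; exact hinv w
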